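/- For every real ρ with 0 ≤ ρ ≤ 1 and every real t, one has |1 − ρ + ρ e^{2πit}| ≤ exp(−8ρ(1−ρ)‖t‖²), where ‖t‖ denotes the distance from t to the nearest integer. -/

import Mathlib

/-- `|1 - ρ + ρ e^{2πit}| ≤ exp(-8ρ(1-ρ)‖t‖²)`, where `‖t‖ = |t - round t|`
is the distance from `t` to the nearest integer. -/
theorem abs_one_sub_rho_add_rho_exp_le
    (ρ t : ℝ) (hρ0 : 0 ≤ ρ) (hρ1 : ρ ≤ 1) :
    ‖1 - (ρ : ℂ) + (ρ : ℂ) * Complex.exp (2 * Real.pi * Complex.I * (t : ℂ))‖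
      ≤ Real.exp (-8 * ρ * (1 - ρ) * |t - round t| ^ 2) := by
  set d : ℝ := |t - round t| with hd
  have hd0 : 0 ≤ d := abs_nonneg _
  have hdhalf : d ≤ 1 / 2 := abs_sub_round t
  have hπ : 0 < Real.pi := Real.pi_pos
  -- rewrite the exponential
  have hexp : Complex.exp (2 * Real.pi * Complex.I * (t : ℂ))
      = (Real.cos (2 * Real.pi * t) : ℂ) + (Real.sin (2 * Real.pi * t) : ℂ) * Complex.I := by
    have : (2 * Real.pi * Complex.I * (t : ℂ)) = ((2 * Real.pi * t : ℝ) : ℂ) * Complex.I := by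
      push_cast; ring
    rw [this, Complex.exp_mul_I, ← Complex.ofReal_cos, ← Complex.ofReal_sin]
  set c := Real.cos (2 * Real.pi * t) with hc
  set s := Real.sin (2 * Real.pi * t) with hs
  have hcs : s ^ 2 + c ^ 2 = 1 := Real.sin_sq_add_cos_sq _
  -- square of the absolute value
  have hsq : ‖1 - (ρ : ℂ) + (ρ : ℂ) * Complex.exp (2 * Real.pi * Complex.I * (t : ℂ))‖ ^ 2
      = (1 - ρ + ρ * c) ^ 2 + (ρ * s) ^ 2 := by
    rw [hexp]
    have : (1 - (ρ : ℂ) + (ρ : ℂ) * ((c : ℂ) + (s : ℂ) * Complex.I))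
        = ((1 - ρ + ρ * c : ℝ) : ℂ) + ((ρ * s : ℝ) : ℂ) * Complex.I := by
      push_cast; ring
    rw [this, Complex.sq_norm, Complex.normSq_add_mul_I]
  -- sin(π t)^2 = sin(π d)^2
  have hsin_eq : Real.sin (Real.pi * t) ^ 2 = Real.sin (Real.pi * d) ^ 2 := by
    have h1 : Real.sin (Real.pi * t) ^ 2 = Real.sin (Real.pi * (t - round t)) ^ 2 := by
      have : Real.pi * t = Real.pi * (t - round t) + (round t : ℝ) * Real.pi := by ring
      rw [this, Real.sin_add, Real.sin_int_mul_pi]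
      have hc2 : Real.cos ((round t : ℝ) * Real.pi) ^ 2 = 1 := by
        have := Real.sin_sq_add_cos_sq ((round t : ℝ) * Real.pi)
        rw [Real.sin_int_mul_pi] at this; nlinarith
      nlinarith
    rw [h1]
    rcases abs_cases (t - round t) with ⟨h, _⟩ | ⟨h, _⟩
    · rw [hd, h]
    · rw [hd, h, mul_neg, Real.sin_neg]; ring
  -- double angle: 1 - c = 2 sin(π t)^2
  have hdouble : 1 - c = 2 * Real.sin (Real.pi * t) ^ 2 := by
    have : 2 * Real.pi * t = 2 * (Real.pi * t) := by ring
    rw [hc, this, Real.cos_two_mul]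
    have := Real.sin_sq_add_cos_sq (Real.pi * t)
    nlinarith
  -- Jordan: sin(π d) ≥ 2 d
  have hjordan : 2 * d ≤ Real.sin (Real.pi * d) := by
    have h1 : 0 ≤ Real.pi * d := by positivity
    have h2 : Real.pi * d ≤ Real.pi / 2 := by nlinarith
    have := Real.mul_le_sin h1 h2
    have hπ' : Real.pi ≠ 0 := ne_of_gt hπ
    calc 2 * d = 2 / Real.pi * (Real.pi * d) := by field_simp
    _ ≤ Real.sin (Real.pi * d) := this
  have hsinsq : 4 * d ^ 2 ≤ Real.sin (Real.pi * t) ^ 2 := by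
    rw [hsin_eq]; nlinarith
  -- combine
  have hcle : c ≤ 1 := Real.cos_le_one _
  have key : (1 - ρ + ρ * c) ^ 2 + (ρ * s) ^ 2 ≤ Real.exp (-8 * ρ * (1 - ρ) * d ^ 2) ^ 2 := by
    have hX : (1 - ρ + ρ * c) ^ 2 + (ρ * s) ^ 2 = 1 - 2 * ρ * (1 - ρ) * (1 - c) := by
      linear_combination ρ ^ 2 * hcs
    have hexp2 : Real.exp (-8 * ρ * (1 - ρ) * d ^ 2) ^ 2
        = Real.exp (-16 * ρ * (1 - ρ) * d ^ 2) := by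
      rw [sq, ← Real.exp_add]; ring_nf
    rw [hX, hexp2]
    have hle : 1 - 16 * ρ * (1 - ρ) * d ^ 2 ≤ Real.exp (-16 * ρ * (1 - ρ) * d ^ 2) := by
      have := Real.add_one_le_exp (-16 * ρ * (1 - ρ) * d ^ 2)
      linarith
    have hρρ : 0 ≤ ρ * (1 - ρ) := mul_nonneg hρ0 (by linarith)
    nlinarith [hdouble, hsinsq]
  have habs0 : 0 ≤ ‖1 - (ρ : ℂ) + (ρ : ℂ) * Complex.exp (2 * Real.pi * Complex.I * (t : ℂ))‖ :=
    norm_nonneg _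
  have h2 : ‖1 - (ρ : ℂ) + (ρ : ℂ) * Complex.exp (2 * Real.pi * Complex.I * (t : ℂ))‖ ^ 2
      ≤ Real.exp (-8 * ρ * (1 - ρ) * d ^ 2) ^ 2 := by rw [hsq]; exact key
  exact (pow_le_pow_iff_left₀ habs0 (Real.exp_nonneg _) (by norm_num)).mp h2
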